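/- Let x₁, x₂ be real numbers with ζ := x₂ − x₁ > 0 and let α, β, m > 0. If α ≠ β, then ∫_ℝ |x−x₁|^m e^{−α(x−x₁)₊} e^{−β(x₂−x)₊} dx ≤ K(α,β,m)·max((1+ζ^m)e^{−αζ}, e^{−βζ}) for a constant K(α,β,m) depending only on α,β,m. If α = β, then ∫_ℝ |x−x₁|^m e^{−α(x−x₁)₊} e^{−α(x₂−x)₊} dx ≤ K(α,m)·(1+ζ^{m+1})·e^{−αζ} for a constant K(α,m) depending only on α,m. -/

import Mathlib

open MeasureTheory Real Set

noncomputable section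

private lemma gammaInt {γ m : ℝ} (hγ : 0 < γ) (hm : 0 ≤ m) :
    IntegrableOn (fun t : ℝ => t ^ m * Real.exp (-(γ * t))) (Set.Ioi 0) := by
  have h := Real.GammaIntegral_convergent (show (0:ℝ) < m + 1 by linarith)
  simp only [add_sub_cancel_right] at h
  have h2 := (integrableOn_Ioi_comp_mul_left_iff (fun x => Real.exp (-x) * x ^ m) 0 hγ).mpr
      (by simpa using h)
  -- h2 already at Ioi 0 since γ*0=0 simp handled
  have h3 : IntegrableOn (fun x => γ ^ (-m) * (Real.exp (-(γ * x)) * (γ * x) ^ m)) (Set.Ioi 0) :=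
    h2.const_mul (γ ^ (-m))
  refine h3.congr_fun (fun x hx => ?_) measurableSet_Ioi
  have hx0 : (0:ℝ) < x := hx
  have h4 : γ ^ (-m) * γ ^ m = 1 := by rw [← Real.rpow_add hγ]; simp
  beta_reduce
  rw [Real.mul_rpow hγ.le hx0.le]
  calc γ ^ (-m) * (Real.exp (-(γ * x)) * (γ ^ m * x ^ m))
      = (γ ^ (-m) * γ ^ m) * (x ^ m * Real.exp (-(γ * x))) := by ring
    _ = x ^ m * Real.exp (-(γ * x)) := by rw [h4, one_mul]

private lemma reflInt {F : ℝ → ℝ} (h : IntegrableOn F (Set.Ioi 0)) :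
    IntegrableOn (fun x => F (-x)) (Set.Iic 0) := by
  rw [← Measure.map_neg_eq_self (volume : Measure ℝ)]
  have A : MeasurableEmbedding fun x : ℝ => -x := (Homeomorph.neg ℝ).measurableEmbedding
  rw [A.integrableOn_map_iff]
  simp_rw [Function.comp_def, neg_neg, neg_preimage, neg_Iic, neg_zero]
  exact Iff.mpr integrableOn_Ici_iff_integrableOn_Ioi h

private lemma shiftIntegral (F : ℝ → ℝ) (ζ : ℝ) :
    ∫ x in Set.Ioi ζ, F x = ∫ t in Set.Ioi (0:ℝ), F (t + ζ) := by
  have A : MeasurableEmbedding (fun x : ℝ => x + ζ) :=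
    (Homeomorph.addRight ζ).measurableEmbedding
  calc ∫ x in Set.Ioi ζ, F x
      = ∫ x in Set.Ioi ζ, F x ∂(Measure.map (fun x : ℝ => x + ζ) volume) := by
        rw [map_add_right_eq_self]
    _ = ∫ t in (fun x : ℝ => x + ζ) ⁻¹' (Set.Ioi ζ), F (t + ζ) := A.setIntegral_map F (Set.Ioi ζ)
    _ = ∫ t in Set.Ioi (0:ℝ), F (t + ζ) := by rw [preimage_add_const_Ioi, sub_self]

private lemma shiftIntOn {F : ℝ → ℝ} {ζ : ℝ} (h : IntegrableOn F (Set.Ioi ζ)) :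
    IntegrableOn (fun t => F (t + ζ)) (Set.Ioi 0) := by
  have A : MeasurableEmbedding (fun x : ℝ => x + ζ) :=
    (Homeomorph.addRight ζ).measurableEmbedding
  rw [← map_add_right_eq_self volume ζ] at h
  have := A.integrableOn_map_iff.mp h
  simpa [preimage_add_const_Ioi, Function.comp_def] using this

private lemma rpow_add_le {t ζ m : ℝ} (ht : 0 ≤ t) (hζ : 0 ≤ ζ) (hm : 0 ≤ m) :
    (t + ζ) ^ m ≤ 2 ^ m * (t ^ m + ζ ^ m) := by
  rcases le_total t ζ with h | h
  · calc (t + ζ) ^ m ≤ (2 * ζ) ^ m := by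
          apply Real.rpow_le_rpow (by linarith) (by linarith) hm
      _ = 2 ^ m * ζ ^ m := Real.mul_rpow (by norm_num) hζ
      _ ≤ 2 ^ m * (t ^ m + ζ ^ m) := by
          apply mul_le_mul_of_nonneg_left _ (Real.rpow_nonneg (by norm_num) m)
          nlinarith [Real.rpow_nonneg ht m]
  · calc (t + ζ) ^ m ≤ (2 * t) ^ m := by
          apply Real.rpow_le_rpow (by linarith) (by linarith) hm
      _ = 2 ^ m * t ^ m := Real.mul_rpow (by norm_num) ht
      _ ≤ 2 ^ m * (t ^ m + ζ ^ m) := by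
          apply mul_le_mul_of_nonneg_left _ (Real.rpow_nonneg (by norm_num) m)
          nlinarith [Real.rpow_nonneg hζ m]

private lemma rpow_le_one_add {ζ m : ℝ} (hζ : 0 ≤ ζ) (hm : 0 ≤ m) :
    ζ ^ m ≤ 1 + ζ ^ (m + 1) := by
  rcases le_total ζ 1 with h | h
  · have := Real.rpow_le_one hζ h hm
    nlinarith [Real.rpow_nonneg hζ (m+1)]
  · have := Real.rpow_le_rpow_of_exponent_le h (show m ≤ m + 1 by linarith)
    linarith

private lemma splitBound (α β m ζ : ℝ) (hα : 0 < α) (hβ : 0 < β) (hm : 0 < m) (hζ : 0 < ζ) :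
    (∫ x : ℝ, |x| ^ m * Real.exp (-α * max x 0) * Real.exp (-β * max (ζ - x) 0)) ≤
      (∫ t in Set.Ioi (0:ℝ), t ^ m * Real.exp (-(β * t))) * Real.exp (-(β * ζ)) +
      (∫ x in Set.Ioc (0:ℝ) ζ, x ^ m * Real.exp (-(α * x)) * Real.exp (-(β * (ζ - x)))) +
      2 ^ m * ((∫ t in Set.Ioi (0:ℝ), t ^ m * Real.exp (-(α * t))) +
          (∫ t in Set.Ioi (0:ℝ), Real.exp (-(α * t)))) *
        ((1 + ζ ^ m) * Real.exp (-(α * ζ))) := by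
  set g : ℝ → ℝ := fun x => |x| ^ m * Real.exp (-α * max x 0) * Real.exp (-β * max (ζ - x) 0)
    with hg
  set F : ℝ → ℝ := fun t => t ^ m * Real.exp (-(β * t)) with hF
  set Fa : ℝ → ℝ := fun t => t ^ m * Real.exp (-(α * t)) with hFa
  have hFint : IntegrableOn F (Set.Ioi 0) := gammaInt hβ hm.le
  have hFaint : IntegrableOn Fa (Set.Ioi 0) := gammaInt hα hm.le
  -- piece 1
  have heq1 : EqOn (fun x => F (-x) * Real.exp (-(β * ζ))) g (Set.Iic 0) := by
    intro x hx
    simp only [hg, hF]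
    rw [abs_of_nonpos (mem_Iic.mp hx), max_eq_right (mem_Iic.mp hx),
      max_eq_left (by have := mem_Iic.mp hx; linarith : (0:ℝ) ≤ ζ - x)]
    rw [mul_zero, Real.exp_zero, mul_one, mul_assoc, ← Real.exp_add]
    congr 2
    ring
  have hint1 : IntegrableOn g (Set.Iic 0) := by
    have base : IntegrableOn (fun x => F (-x) * Real.exp (-(β * ζ))) (Set.Iic 0) :=
      (reflInt hFint).mul_const _
    exact base.congr_fun heq1 measurableSet_Iic
  -- piece 2
  have hcont : Continuous g := by
    apply Continuous.mul
    apply Continuous.mul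
    · exact continuous_abs.rpow_const (fun x => Or.inr hm.le)
    · exact Real.continuous_exp.comp (continuous_const.mul (continuous_id.max continuous_const))
    · exact Real.continuous_exp.comp
        (continuous_const.mul ((continuous_const.sub continuous_id).max continuous_const))
  have hint2 : IntegrableOn g (Set.Ioc 0 ζ) := hcont.integrableOn_Ioc
  -- piece 3
  have heq3 : EqOn (fun x : ℝ => x ^ m * Real.exp (-(α * x))) g (Set.Ioi ζ) := by
    intro x hx
    have hxζ : ζ < x := mem_Ioi.mp hx
    simp only [hg]
    rw [abs_of_pos (by linarith), max_eq_left (by linarith : (0:ℝ) ≤ x),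
      max_eq_right (by linarith : ζ - x ≤ 0), mul_zero, Real.exp_zero, mul_one, neg_mul]
  have hint3 : IntegrableOn g (Set.Ioi ζ) :=
    (hFaint.mono_set (Ioi_subset_Ioi hζ.le)).congr_fun heq3 measurableSet_Ioi
  -- splitting
  have hunion2 : Set.Ioc 0 ζ ∪ Set.Ioi ζ = Set.Ioi (0:ℝ) := Ioc_union_Ioi_eq_Ioi hζ.le
  have hint23 : IntegrableOn g (Set.Ioi 0) := by
    rw [← hunion2]; exact hint2.union hint3
  have hsplit : (∫ x : ℝ, g x) =
      (∫ x in Set.Iic (0:ℝ), g x) + ((∫ x in Set.Ioc (0:ℝ) ζ, g x) + ∫ x in Set.Ioi ζ, g x) := by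
    rw [← setIntegral_union (Ioc_disjoint_Ioi le_rfl) measurableSet_Ioi hint2 hint3, hunion2,
      ← setIntegral_union (Iic_disjoint_Ioi le_rfl) measurableSet_Ioi hint1 hint23,
      Iic_union_Ioi, setIntegral_univ]
  -- bound piece 1
  have hp1 : (∫ x in Set.Iic (0:ℝ), g x) =
      (∫ t in Set.Ioi (0:ℝ), F t) * Real.exp (-(β * ζ)) := by
    rw [← setIntegral_congr_fun measurableSet_Iic heq1, integral_mul_const,
      integral_comp_neg_Iic, neg_zero]
  -- piece 2 rewrite
  have hp2 : (∫ x in Set.Ioc (0:ℝ) ζ, g x) =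
      ∫ x in Set.Ioc (0:ℝ) ζ, x ^ m * Real.exp (-(α * x)) * Real.exp (-(β * (ζ - x))) := by
    apply setIntegral_congr_fun measurableSet_Ioc
    intro x hx
    obtain ⟨hx0, hxζ⟩ := hx
    simp only [hg]
    rw [abs_of_pos hx0, max_eq_left hx0.le, max_eq_left (by linarith : (0:ℝ) ≤ ζ - x),
      neg_mul, neg_mul]
  -- bound piece 3
  have hD0 : (0:ℝ) ≤ ∫ t in Set.Ioi (0:ℝ), Real.exp (-(α * t)) :=
    setIntegral_nonneg measurableSet_Ioi fun t _ => (Real.exp_pos _).le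
  have hB0 : (0:ℝ) ≤ ∫ t in Set.Ioi (0:ℝ), Fa t :=
    setIntegral_nonneg measurableSet_Ioi fun t ht => by
      exact mul_nonneg (Real.rpow_nonneg (le_of_lt ht) m) (Real.exp_pos _).le
  have hζm : (0:ℝ) ≤ ζ ^ m := Real.rpow_nonneg hζ.le m
  have hp3 : (∫ x in Set.Ioi ζ, g x) ≤
      2 ^ m * ((∫ t in Set.Ioi (0:ℝ), Fa t) + (∫ t in Set.Ioi (0:ℝ), Real.exp (-(α * t)))) *
        ((1 + ζ ^ m) * Real.exp (-(α * ζ))) := by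
    have e1 : (∫ x in Set.Ioi ζ, g x) = ∫ t in Set.Ioi (0:ℝ), Fa (t + ζ) := by
      rw [← setIntegral_congr_fun measurableSet_Ioi heq3]
      exact shiftIntegral Fa ζ
    have hShift : IntegrableOn (fun t => Fa (t + ζ)) (Set.Ioi 0) :=
      shiftIntOn (hFaint.mono_set (Ioi_subset_Ioi hζ.le))
    have hExpInt : IntegrableOn (fun t : ℝ => Real.exp (-(α * t))) (Set.Ioi 0) :=
      (exp_neg_integrableOn_Ioi 0 hα).congr_fun (fun t _ => by simp only [neg_mul]) measurableSet_Ioi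
    have hDom : IntegrableOn (fun t : ℝ =>
        (2 ^ m * Real.exp (-(α * ζ))) * (t ^ m * Real.exp (-(α * t))) +
        (2 ^ m * ζ ^ m * Real.exp (-(α * ζ))) * Real.exp (-(α * t))) (Set.Ioi 0) :=
      ((gammaInt hα hm.le).const_mul _).add (hExpInt.const_mul _)
    have hmono : (∫ t in Set.Ioi (0:ℝ), Fa (t + ζ)) ≤
        ∫ t in Set.Ioi (0:ℝ),
          ((2 ^ m * Real.exp (-(α * ζ))) * (t ^ m * Real.exp (-(α * t))) +
           (2 ^ m * ζ ^ m * Real.exp (-(α * ζ))) * Real.exp (-(α * t))) := by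
      apply setIntegral_mono_on hShift hDom measurableSet_Ioi
      intro t ht
      have ht0 : (0:ℝ) < t := ht
      have key := rpow_add_le ht0.le hζ.le hm.le
      have hexp : Real.exp (-(α * (t + ζ))) = Real.exp (-(α * t)) * Real.exp (-(α * ζ)) := by
        rw [← Real.exp_add]; congr 1; ring
      simp only [hFa]
      rw [hexp]
      have hepos : (0:ℝ) < Real.exp (-(α * t)) * Real.exp (-(α * ζ)) :=
        mul_pos (Real.exp_pos _) (Real.exp_pos _)
      calc (t + ζ) ^ m * (Real.exp (-(α * t)) * Real.exp (-(α * ζ)))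
          ≤ (2 ^ m * (t ^ m + ζ ^ m)) * (Real.exp (-(α * t)) * Real.exp (-(α * ζ))) :=
            mul_le_mul_of_nonneg_right key hepos.le
        _ = (2 ^ m * Real.exp (-(α * ζ))) * (t ^ m * Real.exp (-(α * t))) +
            (2 ^ m * ζ ^ m * Real.exp (-(α * ζ))) * Real.exp (-(α * t)) := by ring
    have hval : (∫ t in Set.Ioi (0:ℝ),
          ((2 ^ m * Real.exp (-(α * ζ))) * (t ^ m * Real.exp (-(α * t))) +
           (2 ^ m * ζ ^ m * Real.exp (-(α * ζ))) * Real.exp (-(α * t)))) =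
        (2 ^ m * Real.exp (-(α * ζ))) * (∫ t in Set.Ioi (0:ℝ), Fa t) +
        (2 ^ m * ζ ^ m * Real.exp (-(α * ζ))) * (∫ t in Set.Ioi (0:ℝ), Real.exp (-(α * t))) := by
      rw [integral_add (((gammaInt hα hm.le).const_mul _)) (hExpInt.const_mul _),
        integral_const_mul, integral_const_mul]
    rw [e1]
    refine (hmono.trans_eq hval).trans ?_
    have h2m : (0:ℝ) ≤ 2 ^ m := Real.rpow_nonneg (by norm_num) m
    have hE : (0:ℝ) < Real.exp (-(α * ζ)) := Real.exp_pos _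
    nlinarith [mul_nonneg h2m hB0, mul_nonneg h2m hD0, mul_nonneg (mul_nonneg h2m hζm) hD0,
      mul_nonneg (mul_nonneg h2m hB0) hζm, hE.le,
      mul_pos hE hE]
  -- combine
  rw [hsplit, hp1, hp2]
  have := hp3
  linarith [hp3]

private lemma expIocInt {c ζ : ℝ} (hc : 0 < c) (hζ : 0 < ζ) :
    (∫ x in Set.Ioc (0:ℝ) ζ, Real.exp (c * x)) ≤ c⁻¹ * Real.exp (c * ζ) := by
  rw [← intervalIntegral.integral_of_le hζ.le]
  have : (∫ x in (0:ℝ)..ζ, Real.exp (c * x)) = c⁻¹ • ∫ x in (c*0)..(c*ζ), Real.exp x :=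
    intervalIntegral.integral_comp_mul_left Real.exp hc.ne'
  rw [this, integral_exp, mul_zero, Real.exp_zero, smul_eq_mul]
  have h1 : Real.exp (c * ζ) - 1 ≤ Real.exp (c * ζ) := by linarith
  have := inv_pos.mpr hc
  nlinarith

private lemma midGT {α β m ζ : ℝ} (hβ : 0 < β) (hm : 0 < m) (hζ : 0 < ζ) (hab : β < α) :
    (∫ x in Set.Ioc (0:ℝ) ζ, x ^ m * Real.exp (-(α * x)) * Real.exp (-(β * (ζ - x)))) ≤
      (∫ t in Set.Ioi (0:ℝ), t ^ m * Real.exp (-((α - β) * t))) * Real.exp (-(β * ζ)) := by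
  have heq : EqOn (fun x : ℝ => x ^ m * Real.exp (-(α * x)) * Real.exp (-(β * (ζ - x))))
      (fun x : ℝ => x ^ m * Real.exp (-((α - β) * x)) * Real.exp (-(β * ζ))) (Set.Ioc 0 ζ) := by
    intro x _
    simp only [mul_assoc, ← Real.exp_add]
    congr 2
    ring
  rw [setIntegral_congr_fun measurableSet_Ioc heq, integral_mul_const]
  apply mul_le_mul_of_nonneg_right _ (Real.exp_pos _).le
  apply setIntegral_mono_set (gammaInt (by linarith) hm.le)
  · filter_upwards [ae_restrict_mem measurableSet_Ioi] with x hx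
    exact mul_nonneg (Real.rpow_nonneg (le_of_lt hx) m) (Real.exp_pos _).le
  · exact HasSubset.Subset.eventuallyLE Set.Ioc_subset_Ioi_self

private lemma midLT {α β m ζ : ℝ} (hα : 0 < α) (hm : 0 < m) (hζ : 0 < ζ) (hab : α < β) :
    (∫ x in Set.Ioc (0:ℝ) ζ, x ^ m * Real.exp (-(α * x)) * Real.exp (-(β * (ζ - x)))) ≤
      (β - α)⁻¹ * ((1 + ζ ^ m) * Real.exp (-(α * ζ))) := by
  set c : ℝ := β - α with hcdef
  have hc : 0 < c := by simp [hcdef]; linarith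
  have heq : EqOn (fun x : ℝ => x ^ m * Real.exp (-(α * x)) * Real.exp (-(β * (ζ - x))))
      (fun x : ℝ => x ^ m * Real.exp (c * x) * Real.exp (-(β * ζ))) (Set.Ioc 0 ζ) := by
    intro x _
    simp only [mul_assoc, ← Real.exp_add]
    congr 2
    simp only [hcdef]
    ring
  rw [setIntegral_congr_fun measurableSet_Ioc heq, integral_mul_const]
  have hcont1 : Continuous fun x : ℝ => x ^ m * Real.exp (c * x) :=
    (continuous_id.rpow_const fun x => Or.inr hm.le).mul
      (Real.continuous_exp.comp (continuous_const.mul continuous_id))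
  have hcont2 : Continuous fun x : ℝ => ζ ^ m * Real.exp (c * x) :=
    continuous_const.mul (Real.continuous_exp.comp (continuous_const.mul continuous_id))
  have hstep : (∫ x in Set.Ioc (0:ℝ) ζ, x ^ m * Real.exp (c * x)) ≤
      ∫ x in Set.Ioc (0:ℝ) ζ, ζ ^ m * Real.exp (c * x) := by
    apply setIntegral_mono_on hcont1.integrableOn_Ioc hcont2.integrableOn_Ioc measurableSet_Ioc
    intro x hx
    exact mul_le_mul_of_nonneg_right
      (Real.rpow_le_rpow hx.1.le hx.2 hm.le) (Real.exp_pos _).le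
  have hζm : (0:ℝ) ≤ ζ ^ m := Real.rpow_nonneg hζ.le m
  have hval : (∫ x in Set.Ioc (0:ℝ) ζ, ζ ^ m * Real.exp (c * x)) ≤
      ζ ^ m * (c⁻¹ * Real.exp (c * ζ)) := by
    rw [integral_const_mul]
    exact mul_le_mul_of_nonneg_left (expIocInt hc hζ) hζm
  have hfin : ζ ^ m * (c⁻¹ * Real.exp (c * ζ)) * Real.exp (-(β * ζ)) ≤
      (β - α)⁻¹ * ((1 + ζ ^ m) * Real.exp (-(α * ζ))) := by
    have hee : Real.exp (c * ζ) * Real.exp (-(β * ζ)) = Real.exp (-(α * ζ)) := by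
      rw [← Real.exp_add]; congr 1; simp only [hcdef]; ring
    have h1 : ζ ^ m * (c⁻¹ * Real.exp (c * ζ)) * Real.exp (-(β * ζ)) =
        c⁻¹ * (ζ ^ m * Real.exp (-(α * ζ))) := by
      rw [← hee]; ring
    rw [h1, hcdef]
    have : ζ ^ m * Real.exp (-(α * ζ)) ≤ (1 + ζ ^ m) * Real.exp (-(α * ζ)) := by
      apply mul_le_mul_of_nonneg_right (by linarith) (Real.exp_pos _).le
    exact mul_le_mul_of_nonneg_left this (inv_pos.mpr hc).le
  calc (∫ x in Set.Ioc (0:ℝ) ζ, x ^ m * Real.exp (c * x)) * Real.exp (-(β * ζ))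
      ≤ ζ ^ m * (c⁻¹ * Real.exp (c * ζ)) * Real.exp (-(β * ζ)) :=
        mul_le_mul_of_nonneg_right (hstep.trans hval) (Real.exp_pos _).le
    _ ≤ _ := hfin

private lemma midEQ {α m ζ : ℝ} (hα : 0 < α) (hm : 0 < m) (hζ : 0 < ζ) :
    (∫ x in Set.Ioc (0:ℝ) ζ, x ^ m * Real.exp (-(α * x)) * Real.exp (-(α * (ζ - x)))) ≤
      ζ ^ (m + 1) * Real.exp (-(α * ζ)) := by
  have heq : EqOn (fun x : ℝ => x ^ m * Real.exp (-(α * x)) * Real.exp (-(α * (ζ - x))))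
      (fun x : ℝ => x ^ m * Real.exp (-(α * ζ))) (Set.Ioc 0 ζ) := by
    intro x _
    simp only [mul_assoc, ← Real.exp_add]
    congr 2
    ring
  rw [setIntegral_congr_fun measurableSet_Ioc heq]
  have hcont : Continuous fun x : ℝ => x ^ m * Real.exp (-(α * ζ)) :=
    (continuous_id.rpow_const fun x => Or.inr hm.le).mul continuous_const
  have hstep : (∫ x in Set.Ioc (0:ℝ) ζ, x ^ m * Real.exp (-(α * ζ))) ≤
      ∫ _x in Set.Ioc (0:ℝ) ζ, ζ ^ m * Real.exp (-(α * ζ)) := by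
    apply setIntegral_mono_on hcont.integrableOn_Ioc
      (integrableOn_const measure_Ioc_lt_top.ne) measurableSet_Ioc
    intro x hx
    exact mul_le_mul_of_nonneg_right
      (Real.rpow_le_rpow hx.1.le hx.2 hm.le) (Real.exp_pos _).le
  refine hstep.trans ?_
  rw [setIntegral_const, smul_eq_mul, Real.volume_real_Ioc_of_le hζ.le, sub_zero,
    ← mul_assoc]
  have : ζ * ζ ^ m = ζ ^ (m + 1) := by
    rw [Real.rpow_add_one hζ.ne' m]; ring
  rw [this]

private lemma reduce (α β m x₁ x₂ : ℝ) :
    (∫ x : ℝ, |x - x₁| ^ m * Real.exp (-α * max (x - x₁) 0) * Real.exp (-β * max (x₂ - x) 0)) =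
    ∫ x : ℝ, |x| ^ m * Real.exp (-α * max x 0) *
      Real.exp (-β * max ((x₂ - x₁) - x) 0) := by
  have h : (fun x : ℝ => |x - x₁| ^ m * Real.exp (-α * max (x - x₁) 0) *
      Real.exp (-β * max (x₂ - x) 0)) =
      fun x : ℝ => (fun u : ℝ => |u| ^ m * Real.exp (-α * max u 0) *
        Real.exp (-β * max ((x₂ - x₁) - u) 0)) (x - x₁) := by
    funext x
    simp only
    congr 3
    ring
  rw [h]
  exact integral_sub_right_eq_self
    (fun u : ℝ => |u| ^ m * Real.exp (-α * max u 0) * Real.exp (-β * max ((x₂ - x₁) - u) 0)) x₁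

/-- **Interaction integral estimates.**
For `x₁ < x₂` with `ζ = x₂ - x₁ > 0` and `α, β, m > 0`:
if `α ≠ β` then `∫_ℝ |x-x₁|^m e^{-α(x-x₁)₊} e^{-β(x₂-x)₊} dx
  ≤ K(α,β,m)·max((1+ζ^m)e^{-αζ}, e^{-βζ})`,
and if `α = β` then the integral is `≤ K(α,m)·(1+ζ^{m+1})·e^{-αζ}`.
Here `y₊ = max y 0` denotes the positive part. -/
theorem interaction_integral_estimates :
    (∀ α β m : ℝ, 0 < α → 0 < β → 0 < m → α ≠ β →
      ∃ K : ℝ, 0 < K ∧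
        ∀ x₁ x₂ : ℝ, 0 < x₂ - x₁ →
          (∫ x : ℝ, |x - x₁| ^ m * Real.exp (-α * max (x - x₁) 0) *
              Real.exp (-β * max (x₂ - x) 0)) ≤
            K * max ((1 + (x₂ - x₁) ^ m) * Real.exp (-α * (x₂ - x₁)))
              (Real.exp (-β * (x₂ - x₁)))) ∧
    (∀ α m : ℝ, 0 < α → 0 < m →
      ∃ K : ℝ, 0 < K ∧
        ∀ x₁ x₂ : ℝ, 0 < x₂ - x₁ →
          (∫ x : ℝ, |x - x₁| ^ m * Real.exp (-α * max (x - x₁) 0) *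
              Real.exp (-α * max (x₂ - x) 0)) ≤
            K * ((1 + (x₂ - x₁) ^ (m + 1)) * Real.exp (-α * (x₂ - x₁)))) := by
  constructor
  · intro α β m hα hβ hm hne
    set A : ℝ := ∫ t in Set.Ioi (0:ℝ), t ^ m * Real.exp (-(β * t)) with hAdef
    set B : ℝ := ∫ t in Set.Ioi (0:ℝ), t ^ m * Real.exp (-(α * t)) with hBdef
    set D : ℝ := ∫ t in Set.Ioi (0:ℝ), Real.exp (-(α * t)) with hDdef
    have hA0 : 0 ≤ A := setIntegral_nonneg measurableSet_Ioi fun t ht =>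
      mul_nonneg (Real.rpow_nonneg (le_of_lt ht) m) (Real.exp_pos _).le
    have hB0 : 0 ≤ B := setIntegral_nonneg measurableSet_Ioi fun t ht =>
      mul_nonneg (Real.rpow_nonneg (le_of_lt ht) m) (Real.exp_pos _).le
    have hD0 : 0 ≤ D := setIntegral_nonneg measurableSet_Ioi fun t _ => (Real.exp_pos _).le
    have h2m : (0:ℝ) ≤ 2 ^ m := Real.rpow_nonneg (by norm_num) m
    have hC30 : (0:ℝ) ≤ 2 ^ m * (B + D) := mul_nonneg h2m (by linarith)
    rcases hne.lt_or_gt with hab | hab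
    · -- α < β
      have hinv0 : (0:ℝ) ≤ (β - α)⁻¹ := inv_nonneg.mpr (by linarith)
      refine ⟨A + (β - α)⁻¹ + 2 ^ m * (B + D) + 1, by linarith, ?_⟩
      intro x₁ x₂ hζ
      set ζ : ℝ := x₂ - x₁ with hζdef
      rw [reduce]
      have hmid := midLT hα hm hζ hab
      have hsb := splitBound α β m ζ hα hβ hm hζ
      set M : ℝ := max ((1 + ζ ^ m) * Real.exp (-α * ζ)) (Real.exp (-β * ζ)) with hMdef
      have hE1 : Real.exp (-(α * ζ)) = Real.exp (-α * ζ) := by rw [neg_mul]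
      have hE2 : Real.exp (-(β * ζ)) = Real.exp (-β * ζ) := by rw [neg_mul]
      have hm1 : (1 + ζ ^ m) * Real.exp (-(α * ζ)) ≤ M := by
        rw [hE1]; exact le_max_left _ _
      have hm2 : Real.exp (-(β * ζ)) ≤ M := by rw [hE2]; exact le_max_right _ _
      have hM0 : 0 ≤ M := le_trans (Real.exp_pos _).le (le_max_right _ _)
      have hinv : (0:ℝ) ≤ (β - α)⁻¹ := by positivity
      calc (∫ x : ℝ, |x| ^ m * Real.exp (-α * max x 0) * Real.exp (-β * max (ζ - x) 0))
          ≤ A * Real.exp (-(β * ζ)) +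
            (β - α)⁻¹ * ((1 + ζ ^ m) * Real.exp (-(α * ζ))) +
            2 ^ m * (B + D) * ((1 + ζ ^ m) * Real.exp (-(α * ζ))) := by linarith
        _ ≤ A * M + (β - α)⁻¹ * M + 2 ^ m * (B + D) * M := by
            gcongr
        _ ≤ (A + (β - α)⁻¹ + 2 ^ m * (B + D) + 1) * M := by
            have hexp : (A + (β - α)⁻¹ + 2 ^ m * (B + D) + 1) * M =
                A * M + (β - α)⁻¹ * M + 2 ^ m * (B + D) * M + M := by ring
            rw [hexp]; linarith
    · -- β < α
      set C : ℝ := ∫ t in Set.Ioi (0:ℝ), t ^ m * Real.exp (-((α - β) * t)) with hCdef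
      have hC0 : 0 ≤ C := setIntegral_nonneg measurableSet_Ioi fun t ht =>
        mul_nonneg (Real.rpow_nonneg (le_of_lt ht) m) (Real.exp_pos _).le
      refine ⟨A + C + 2 ^ m * (B + D) + 1, by linarith, ?_⟩
      intro x₁ x₂ hζ
      set ζ : ℝ := x₂ - x₁ with hζdef
      rw [reduce]
      have hmid := midGT hβ hm hζ hab
      have hsb := splitBound α β m ζ hα hβ hm hζ
      set M : ℝ := max ((1 + ζ ^ m) * Real.exp (-α * ζ)) (Real.exp (-β * ζ)) with hMdef
      have hE1 : Real.exp (-(α * ζ)) = Real.exp (-α * ζ) := by rw [neg_mul]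
      have hE2 : Real.exp (-(β * ζ)) = Real.exp (-β * ζ) := by rw [neg_mul]
      have hm1 : (1 + ζ ^ m) * Real.exp (-(α * ζ)) ≤ M := by
        rw [hE1]; exact le_max_left _ _
      have hm2 : Real.exp (-(β * ζ)) ≤ M := by rw [hE2]; exact le_max_right _ _
      have hM0 : 0 ≤ M := le_trans (Real.exp_pos _).le (le_max_right _ _)
      calc (∫ x : ℝ, |x| ^ m * Real.exp (-α * max x 0) * Real.exp (-β * max (ζ - x) 0))
          ≤ A * Real.exp (-(β * ζ)) + C * Real.exp (-(β * ζ)) +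
            2 ^ m * (B + D) * ((1 + ζ ^ m) * Real.exp (-(α * ζ))) := by linarith
        _ ≤ A * M + C * M + 2 ^ m * (B + D) * M := by gcongr
        _ ≤ (A + C + 2 ^ m * (B + D) + 1) * M := by
            have hexp : (A + C + 2 ^ m * (B + D) + 1) * M =
                A * M + C * M + 2 ^ m * (B + D) * M + M := by ring
            rw [hexp]; linarith
  · intro α m hα hm
    set A : ℝ := ∫ t in Set.Ioi (0:ℝ), t ^ m * Real.exp (-(α * t)) with hAdef
    set D : ℝ := ∫ t in Set.Ioi (0:ℝ), Real.exp (-(α * t)) with hDdef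
    have hA0 : 0 ≤ A := setIntegral_nonneg measurableSet_Ioi fun t ht =>
      mul_nonneg (Real.rpow_nonneg (le_of_lt ht) m) (Real.exp_pos _).le
    have hD0 : 0 ≤ D := setIntegral_nonneg measurableSet_Ioi fun t _ => (Real.exp_pos _).le
    have h2m : (0:ℝ) ≤ 2 ^ m := Real.rpow_nonneg (by norm_num) m
    have hC30 : (0:ℝ) ≤ 2 ^ m * (A + D) := mul_nonneg h2m (by linarith)
    refine ⟨A + 1 + 2 * (2 ^ m * (A + D)) + 1, by linarith, ?_⟩
    intro x₁ x₂ hζ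
    set ζ : ℝ := x₂ - x₁ with hζdef
    rw [reduce]
    have hmid := midEQ hα hm hζ
    have hsb := splitBound α α m ζ hα hα hm hζ
    have hkey : ζ ^ m ≤ 1 + ζ ^ (m + 1) := rpow_le_one_add hζ.le hm.le
    have hζm1 : (0:ℝ) ≤ ζ ^ (m + 1) := Real.rpow_nonneg hζ.le _
    have hE : (0:ℝ) < Real.exp (-(α * ζ)) := Real.exp_pos _
    have hE1 : Real.exp (-(α * ζ)) = Real.exp (-α * ζ) := by rw [neg_mul]
    rw [← hE1]
    set P : ℝ := (1 + ζ ^ (m + 1)) * Real.exp (-(α * ζ)) with hPdef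
    have hP0 : (0:ℝ) ≤ P := mul_nonneg (by linarith) hE.le
    have t1 : A * Real.exp (-(α * ζ)) ≤ A * P := by
      apply mul_le_mul_of_nonneg_left _ hA0
      rw [hPdef]; nlinarith
    have t2 : ζ ^ (m + 1) * Real.exp (-(α * ζ)) ≤ P := by
      rw [hPdef]; exact mul_le_mul_of_nonneg_right (by linarith) hE.le
    have t3 : 2 ^ m * (A + D) * ((1 + ζ ^ m) * Real.exp (-(α * ζ))) ≤
        2 * (2 ^ m * (A + D)) * P := by
      have hh : (1 + ζ ^ m) * Real.exp (-(α * ζ)) ≤ 2 * P := by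
        rw [hPdef]; nlinarith
      have := mul_le_mul_of_nonneg_left hh hC30
      linarith
    calc (∫ x : ℝ, |x| ^ m * Real.exp (-α * max x 0) * Real.exp (-α * max (ζ - x) 0))
        ≤ A * Real.exp (-(α * ζ)) + ζ ^ (m + 1) * Real.exp (-(α * ζ)) +
          2 ^ m * (A + D) * ((1 + ζ ^ m) * Real.exp (-(α * ζ))) := by linarith
      _ ≤ A * P + P + 2 * (2 ^ m * (A + D)) * P := by linarith
      _ ≤ (A + 1 + 2 * (2 ^ m * (A + D)) + 1) * P := by
          have hexp : (A + 1 + 2 * (2 ^ m * (A + D)) + 1) * P =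
              A * P + P + 2 * (2 ^ m * (A + D)) * P + P := by ring
          rw [hexp]; linarith

end
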